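/- arXiv:1310.1153 — 2 statements merged into one kernel-verified Lean document; each statement's English description precedes it below -/
import Mathlib

section
/- For all γ_a, γ_b > 0, the compute-and-forward sum rate satisfies [½ log₂(γ_a/(γ_a+γ_b) + γ_a)]⁺ + [½ log₂(γ_b/(γ_a+γ_b) + γ_b)]⁺ ≤ C(γ_a + γ_b), where [x]⁺ = max(x,0). -/
noncomputable def gaussC (γ : ℝ) : ℝ := Real.logb 2 (1 + γ)

theorem cf_sum_rate_le_mac (γa γb : ℝ) (ha : 0 < γa) (hb : 0 < γb) :
    max ((1 / 2) * Real.logb 2 (γa / (γa + γb) + γa)) 0 +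
      max ((1 / 2) * Real.logb 2 (γb / (γa + γb) + γb)) 0 ≤ gaussC (γa + γb) := by
  have hs : 0 < γa + γb := by linarith
  set x := γa / (γa + γb) + γa with hxdef
  set y := γb / (γa + γb) + γb with hydef
  have hx : 0 < x := by positivity
  have hy : 0 < y := by positivity
  have hR : (0:ℝ) ≤ Real.logb 2 (1 + (γa + γb)) :=
    Real.logb_nonneg (by norm_num) (by linarith)
  have hs1 : (0:ℝ) < 1 + (γa + γb) := by linarith
  have hxle : x ≤ 1 + (γa + γb) := by
    have : γa / (γa + γb) ≤ 1 := by
      rw [div_le_one hs]; linarith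
    simp only [hxdef]; linarith
  have hyle : y ≤ 1 + (γa + γb) := by
    have : γb / (γa + γb) ≤ 1 := by
      rw [div_le_one hs]; linarith
    simp only [hydef]; linarith
  have hLx : Real.logb 2 x ≤ Real.logb 2 (1 + (γa + γb)) :=
    Real.logb_le_logb_of_le (by norm_num) hx hxle
  have hLy : Real.logb 2 y ≤ Real.logb 2 (1 + (γa + γb)) :=
    Real.logb_le_logb_of_le (by norm_num) hy hyle
  show _ ≤ Real.logb 2 (1 + (γa + γb))
  rcases le_total ((1/2) * Real.logb 2 x) 0 with h1 | h1
  · rw [max_eq_right h1]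
    rcases le_total ((1/2) * Real.logb 2 y) 0 with h2 | h2
    · rw [max_eq_right h2]; simpa using hR
    · rw [max_eq_left h2]
      have hy0 : 0 ≤ Real.logb 2 y := by linarith
      linarith
  · rw [max_eq_left h1]
    rcases le_total ((1/2) * Real.logb 2 y) 0 with h2 | h2
    · rw [max_eq_right h2]
      have hx0 : 0 ≤ Real.logb 2 x := by linarith
      linarith
    · rw [max_eq_left h2]
      -- both positive: show ½ logb(xy) ≤ logb(1+s)
      have hmul : Real.logb 2 x + Real.logb 2 y = Real.logb 2 (x * y) :=
        (Real.logb_mul hx.ne' hy.ne').symm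
      have hxy : x * y ≤ (1 + (γa + γb))^2 := by
        have h1 : x = γa * (1 + (γa + γb)) / (γa + γb) := by
          field_simp [hxdef]; rw [hxdef]; field_simp
        have h2 : y = γb * (1 + (γa + γb)) / (γa + γb) := by
          field_simp [hydef]; rw [hydef]; field_simp
        rw [h1, h2, div_mul_div_comm, div_le_iff₀ (by positivity)]
        nlinarith [sq_nonneg (γa + γb), sq_nonneg (γa - γb), sq_nonneg (1 + γa + γb)]
      have hLxy : Real.logb 2 (x * y) ≤ Real.logb 2 ((1 + (γa + γb))^2) :=
        Real.logb_le_logb_of_le (by norm_num) (by positivity) hxy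
      rw [Real.logb_pow] at hLxy
      push_cast at hLxy
      linarith
end

section
/- Every rate pair achievable by the CF-BC protocol is also achievable by the CF-CMAC protocol: if (R_a, R_b) satisfies the CF-BC constraints with time fractions (μ₉, μ₁₀, μ₁₁, μ₁₂) summing to at most 1, then it satisfies the CF-CMAC constraints with time fractions (μ₉, μ₁₀, μ₁₃ = μ₁₁ + μ₁₂). -/
lemma gaussC_nonneg {γ : ℝ} (h : 0 ≤ γ) : 0 ≤ gaussC γ :=
  Real.logb_nonneg one_lt_two (by linarith)

lemma gaussC_mono {γ δ : ℝ} (hγ : 0 ≤ γ) (h : γ ≤ δ) : gaussC γ ≤ gaussC δ :=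
  by unfold gaussC; gcongr <;> linarith

theorem cfbc_subset_cfcmac (γa1 γb1 γa2 γb2 : ℝ)
    (ha1 : 0 ≤ γa1) (hb1 : 0 ≤ γb1) (ha2 : 0 ≤ γa2) (hb2 : 0 ≤ γb2)
    (ra1 rb1 ra2 rb2 : ℝ)
    (F₁ F₂ F₃ F₄ μ₉ μ₁₀ μ₁₁ μ₁₂ Ra Rb : ℝ)
    (hF₁ : 0 ≤ F₁) (hF₂ : 0 ≤ F₂) (hF₃ : 0 ≤ F₃) (hF₄ : 0 ≤ F₄)
    (hμ₉ : 0 ≤ μ₉) (hμ₁₀ : 0 ≤ μ₁₀) (hμ₁₁ : 0 ≤ μ₁₁) (hμ₁₂ : 0 ≤ μ₁₂)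
    (hsum : μ₉ + μ₁₀ + μ₁₁ + μ₁₂ ≤ 1)
    (h1 : F₁ ≤ μ₉ * ra1) (h2 : F₂ ≤ μ₉ * rb1)
    (h3 : F₃ ≤ μ₁₀ * ra2) (h4 : F₄ ≤ μ₁₀ * rb2)
    (h5 : F₂ ≤ μ₁₁ * gaussC γa1) (h6 : F₁ ≤ μ₁₁ * gaussC γb1)
    (h7 : F₄ ≤ μ₁₂ * gaussC γa2) (h8 : F₃ ≤ μ₁₂ * gaussC γb2)
    (hRa : Ra = F₁ + F₃) (hRb : Rb = F₂ + F₄) :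
    ∃ μ₁₃ : ℝ, μ₁₃ = μ₁₁ + μ₁₂ ∧ μ₉ + μ₁₀ + μ₁₃ ≤ 1 ∧
      F₁ ≤ μ₉ * ra1 ∧ F₂ ≤ μ₉ * rb1 ∧ F₃ ≤ μ₁₀ * ra2 ∧ F₄ ≤ μ₁₀ * rb2 ∧
      F₂ ≤ μ₁₃ * gaussC γa1 ∧ F₁ ≤ μ₁₃ * gaussC γb1 ∧
      F₄ ≤ μ₁₃ * gaussC γa2 ∧ F₃ ≤ μ₁₃ * gaussC γb2 ∧
      F₂ + F₄ ≤ μ₁₃ * gaussC (γa1 + γa2) ∧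
      F₁ + F₃ ≤ μ₁₃ * gaussC (γb1 + γb2) := by
  refine ⟨μ₁₁ + μ₁₂, rfl, by linarith, h1, h2, h3, h4, ?_, ?_, ?_, ?_, ?_, ?_⟩
  · nlinarith [gaussC_nonneg ha1, mul_nonneg hμ₁₂ (gaussC_nonneg ha1)]
  · nlinarith [mul_nonneg hμ₁₂ (gaussC_nonneg hb1)]
  · nlinarith [mul_nonneg hμ₁₁ (gaussC_nonneg ha2)]
  · nlinarith [mul_nonneg hμ₁₁ (gaussC_nonneg hb2)]
  · have m1 := gaussC_mono ha1 (by linarith : γa1 ≤ γa1 + γa2)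
    have m2 := gaussC_mono ha2 (by linarith : γa2 ≤ γa1 + γa2)
    nlinarith [mul_le_mul_of_nonneg_left m1 hμ₁₁, mul_le_mul_of_nonneg_left m2 hμ₁₂]
  · have m1 := gaussC_mono hb1 (by linarith : γb1 ≤ γb1 + γb2)
    have m2 := gaussC_mono hb2 (by linarith : γb2 ≤ γb1 + γb2)
    nlinarith [mul_le_mul_of_nonneg_left m1 hμ₁₁, mul_le_mul_of_nonneg_left m2 hμ₁₂]
end
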